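/- Let G be a finite non-abelian group that is a Frobenius group with abelian kernel K of odd order and complement of order 2. Then the set of vanishing elements of G is exactly G \ K, which forms a single conjugacy class consisting of involutions. -/

import Mathlib

open CategoryTheory

/-- An element `g` of a group is a *vanishing element* if some irreducible complex
character vanishes at `g`. -/
def IsVanishing {G : Type} [Group G] (g : G) : Prop :=
  ∃ V : FDRep ℂ G, Simple V ∧ V.character g = 0

namespace Stmt13Helper

open Module

variable {G : Type} [Group G]

lemma hom_apply_comm {X Y : FDRep ℂ G} (f : X ⟶ Y) (g : G) (x : X) :
    f.hom (X.ρ g x) = Y.ρ g (f.hom x) :=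
  congrFun (congrArg (fun (φ : X.V ⟶ Y.V) => (φ : X → Y)) (f.comm g)) x

lemma simple_of_invariant_submodule (X : FDRep ℂ G) (hnt : ∃ v : X, v ≠ 0)
    (hsub : ∀ W : Submodule ℂ X, (∀ (g : G) (x : X), x ∈ W → X.ρ g x ∈ W) → W = ⊥ ∨ W = ⊤) :
    Simple X := by
  constructor
  intro Y f hm
  constructor
  · rintro hiso rfl
    obtain ⟨v, hv⟩ := hnt
    have h1 : (inv (0 : Y ⟶ X) ≫ (0 : Y ⟶ X)) = 𝟙 X := IsIso.inv_hom_id _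
    rw [Limits.comp_zero] at h1
    have h2 := congrFun (congrArg (fun (φ : X ⟶ X) => (φ.hom : X → X)) h1) v
    simp only [Action.zero_hom, Action.id_hom] at h2
    exact hv ((by exact h2 : (0:X) = v) ▸ rfl)
  · intro hf
    have hker : ∀ x : Y, f.hom x = 0 → x = 0 := by
      intro x hx
      let k : Submodule ℂ Y := LinearMap.ker (f.hom.hom.hom : Y →ₗ[ℂ] X)
      have hkinv : ∀ (g : G) (y : Y), y ∈ k → Y.ρ g y ∈ k := by
        intro g y hy
        have h1 : f.hom (Y.ρ g y) = X.ρ g (f.hom y) := hom_apply_comm f g y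
        have h2 : f.hom y = 0 := hy
        show f.hom (Y.ρ g y) = 0
        rw [h1, h2, map_zero]
      letI : FiniteDimensional ℂ k := inferInstance
      let ρk : Representation ℂ G k :=
        { toFun := fun g => (Y.ρ g).restrict (fun y hy => hkinv g y hy)
          map_one' := by ext y; simp
          map_mul' := fun g h => by ext y; simp }
      let Z : FDRep ℂ G := FDRep.of ρk
      let ι : Z ⟶ Y := ⟨InducedCategory.homMk (ModuleCat.ofHom (Submodule.subtype k : k →ₗ[ℂ] Y)), fun g => rfl⟩
      have hcomp : ι ≫ f = (0 : Z ⟶ Y) ≫ f := by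
        rw [Limits.zero_comp]
        apply Action.hom_ext
        apply FGModuleCat.hom_ext
        apply LinearMap.ext
        intro z
        show f.hom (ι.hom z) = 0
        exact (z : k).2
      have h3 := hm.right_cancellation _ _ hcomp
      have h4 := congrFun (congrArg (fun (φ : Z ⟶ Y) => (φ.hom : Z → Y)) h3) ⟨x, hx⟩
      exact h4
    have hinj : Function.Injective (f.hom.hom.hom : Y →ₗ[ℂ] X) := by
      rw [← LinearMap.ker_eq_bot]
      exact (Submodule.eq_bot_iff _).mpr (fun x hx => hker x hx)
    have hrange : LinearMap.range (f.hom.hom.hom : Y →ₗ[ℂ] X) = ⊤ := by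
      have hWinv : ∀ (g : G) (x : X), x ∈ LinearMap.range (f.hom.hom.hom : Y →ₗ[ℂ] X) →
          X.ρ g x ∈ LinearMap.range (f.hom.hom.hom : Y →ₗ[ℂ] X) := by
        rintro g x ⟨y, rfl⟩
        exact ⟨Y.ρ g y, hom_apply_comm f g y⟩
      rcases hsub (LinearMap.range (f.hom.hom.hom : Y →ₗ[ℂ] X)) hWinv with h | h
      · exfalso
        apply hf
        apply Action.hom_ext
        apply FGModuleCat.hom_ext
        apply LinearMap.ext
        intro y
        have h5 : f.hom y ∈ LinearMap.range (f.hom.hom.hom : Y →ₗ[ℂ] X) := ⟨y, rfl⟩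
        rw [h] at h5
        simpa using (show f.hom.hom.hom y = 0 from (Submodule.mem_bot ℂ).mp h5)
      · exact h
    have hbij : Function.Bijective (f.hom.hom.hom : Y →ₗ[ℂ] X) :=
      ⟨hinj, LinearMap.range_eq_top.mp hrange⟩
    let e : Y ≃ₗ[ℂ] X := LinearEquiv.ofBijective _ hbij
    have hinvcomm : ∀ (g : G) (x : X), e.symm (X.ρ g x) = Y.ρ g (e.symm x) := by
      intro g x
      apply hinj
      show f.hom _ = f.hom _
      have h1 : ∀ x : X, f.hom (e.symm x) = x := fun x => e.apply_symm_apply x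
      rw [h1, hom_apply_comm f g, h1]
    refine ⟨⟨⟨InducedCategory.homMk (ModuleCat.ofHom (e.symm : X →ₗ[ℂ] Y)), fun g => ?_⟩, ?_, ?_⟩⟩
    · apply FGModuleCat.hom_ext
      apply LinearMap.ext
      intro x
      show e.symm (X.ρ g x) = Y.ρ g (e.symm x)
      exact hinvcomm g x
    · apply Action.hom_ext
      apply FGModuleCat.hom_ext
      apply LinearMap.ext
      intro y
      exact e.symm_apply_apply y
    · apply Action.hom_ext
      apply FGModuleCat.hom_ext
      apply LinearMap.ext
      intro x
      exact e.apply_symm_apply x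

variable {K : Subgroup G}

lemma sq_one (hoddK : Odd (Nat.card K)) (hindex : K.index = 2)
    (hinv : ∀ g : G, g ∉ K → ∀ n ∈ K, g * n * g⁻¹ = n⁻¹)
    {g : G} (hg : g ∉ K) : g * g = 1 := by
  have hsq : g * g ∈ K := Subgroup.mul_self_mem_of_index_two hindex g
  have h1 : g * (g * g) * g⁻¹ = (g * g)⁻¹ := hinv g hg _ hsq
  have h2 : g * (g * g) * g⁻¹ = g * g := by group
  have h3 : (g * g) ^ 2 = 1 := by
    rw [pow_two]
    nth_rewrite 1 [← h2, h1]
    group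
  have hdvd2 : orderOf (g * g) ∣ 2 := orderOf_dvd_of_pow_eq_one h3
  have hdvdK : orderOf (g * g) ∣ Nat.card K := Subgroup.orderOf_dvd_natCard K hsq
  have hco : Nat.Coprime 2 (Nat.card K) := Nat.coprime_two_left.mpr hoddK
  have : orderOf (g * g) ∣ 1 := hco ▸ Nat.dvd_gcd hdvd2 hdvdK
  have h4 : orderOf (g * g) = 1 := Nat.dvd_one.mp this
  have h5 : g * g = 1 := orderOf_eq_one_iff.mp h4
  exact h5

lemma order_two (hoddK : Odd (Nat.card K)) (hindex : K.index = 2)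
    (hinv : ∀ g : G, g ∉ K → ∀ n ∈ K, g * n * g⁻¹ = n⁻¹)
    {g : G} (hg : g ∉ K) : orderOf g = 2 := by
  have h5 := sq_one hoddK hindex hinv hg
  have hg1 : g ≠ 1 := fun h => hg (h ▸ K.one_mem)
  exact orderOf_eq_prime (by rw [pow_two]; exact h5) hg1

lemma prod_mem (hindex : K.index = 2) {g h : G} (hg : g ∉ K) (hh : h ∉ K) :
    g * h ∈ K :=
  (Subgroup.mul_mem_iff_of_index_two hindex).mpr (iff_of_false hg hh)

lemma exists_not_mem (hindex : K.index = 2) : ∃ t : G, t ∉ K := by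
  by_contra h
  push_neg at h
  have : K = ⊤ := (Subgroup.eq_top_iff' K).mpr h
  rw [this, Subgroup.index_top] at hindex
  exact absurd hindex (by norm_num)

lemma conj_of_not_mem (hoddK : Odd (Nat.card K)) (hindex : K.index = 2)
    (hinv : ∀ g : G, g ∉ K → ∀ n ∈ K, g * n * g⁻¹ = n⁻¹)
    {g h : G} (hg : g ∉ K) (hh : h ∉ K) : IsConj g h := by
  have hhinv : h⁻¹ ∉ K := fun hmem => hh (by simpa using K.inv_mem hmem)
  have hmem : g * h⁻¹ ∈ K := prod_mem hindex hg hhinv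
  have hco : (Nat.card K).Coprime 2 := Nat.coprime_two_right.mpr hoddK
  obtain ⟨m, hm⟩ := (powCoprime hco).surjective ⟨g * h⁻¹, hmem⟩
  have hm' : (m : G) * (m : G) = g * h⁻¹ := by
    have h2 : m ^ 2 = (⟨g * h⁻¹, hmem⟩ : K) := by rw [← hm]; rfl
    have h3 := congrArg (Subtype.val) h2
    simpa [pow_two] using h3
  rw [isConj_iff]
  refine ⟨(m : G)⁻¹, ?_⟩
  have hrel : g * (m : G) * g⁻¹ = (m : G)⁻¹ := hinv g hg _ m.2
  have : (m : G)⁻¹ * g * ((m : G)⁻¹)⁻¹ = (m : G)⁻¹ * (g * (m : G) * g⁻¹) * g := by group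
  rw [this, hrel]
  rw [← mul_inv_rev, hm']
  group

lemma not_vanishing_of_mem [Fintype G] (K : Subgroup G) [K.Normal]
    (hab : ∀ a ∈ K, ∀ b ∈ K, a * b = b * a)
    (hoddK : Odd (Nat.card K)) (hindex : K.index = 2)
    (hinv : ∀ g : G, g ∉ K → ∀ n ∈ K, g * n * g⁻¹ = n⁻¹)
    {g : G} (hg : g ∈ K) : ¬ IsVanishing g := by
  rintro ⟨V, hV, hchar⟩
  letI := hV
  obtain ⟨t, ht⟩ := exists_not_mem hindex
  -- V is nontrivial
  have hvne : ∃ v : V, v ≠ 0 := by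
    by_contra h
    push_neg at h
    apply id_nonzero V
    apply Action.hom_ext
    apply FGModuleCat.hom_ext
    apply LinearMap.ext
    intro v
    show (v : V) = 0
    exact h v
  obtain ⟨v0, hv0⟩ := hvne
  haveI : Nontrivial V := nontrivial_of_ne v0 0 hv0
  -- the equivariant endomorphism ρ g + ρ g⁻¹
  have hcomm : ∀ h : G, (V.ρ g + V.ρ g⁻¹) * V.ρ h = V.ρ h * (V.ρ g + V.ρ g⁻¹) := by
    intro h
    by_cases hh : h ∈ K
    · have e1 : g * h = h * g := hab g hg h hh
      have e2 : g⁻¹ * h = h * g⁻¹ := by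
        have := hab g⁻¹ (K.inv_mem hg) h hh
        exact this
      rw [add_mul, mul_add, ← map_mul, ← map_mul, ← map_mul, ← map_mul, e1, e2]
    · have e1 : h * g = g⁻¹ * h := by
        have := hinv h hh g hg
        calc h * g = (h * g * h⁻¹) * h := by group
        _ = g⁻¹ * h := by rw [this]
      have e2 : h * g⁻¹ = g * h := by
        have := hinv h hh g⁻¹ (K.inv_mem hg)
        calc h * g⁻¹ = (h * g⁻¹ * h⁻¹) * h := by group
        _ = g * h := by rw [this]; group
      rw [add_mul, mul_add, ← map_mul, ← map_mul, ← map_mul, ← map_mul, ← e1, ← e2]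
      rw [add_comm]
  let f : V ⟶ V := ⟨InducedCategory.homMk (ModuleCat.ofHom (V.ρ g + V.ρ g⁻¹ : V →ₗ[ℂ] V)), fun h => by
    apply FGModuleCat.hom_ext
    apply LinearMap.ext
    intro x
    exact congrFun (congrArg (fun (ψ : V →ₗ[ℂ] V) => (ψ : V → V)) (hcomm h)) x⟩
  obtain ⟨c, hc⟩ := endomorphism_simple_eq_smul_id (𝕜 := ℂ) f
  have heq : (V.ρ g + V.ρ g⁻¹ : V →ₗ[ℂ] V) = c • LinearMap.id := by
    have h0 := congrArg (fun (φ : V ⟶ V) => (φ.hom.hom.hom : V →ₗ[ℂ] V)) hc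
    exact h0.symm
  -- character of g⁻¹ is also zero
  have hginv : V.character g⁻¹ = 0 := by
    have h1 : t * g * t⁻¹ = g⁻¹ := hinv t ht g hg
    have h2 := FDRep.char_conj V g t
    rw [h1] at h2
    rw [h2, hchar]
  -- take traces
  have htr := congrArg (LinearMap.trace ℂ V) heq
  rw [map_add] at htr
  have htrg : LinearMap.trace ℂ V (V.ρ g) = 0 := hchar
  have htrginv : LinearMap.trace ℂ V (V.ρ g⁻¹) = 0 := hginv
  rw [htrg, htrginv, map_smul, LinearMap.trace_id] at htr
  have hfr : 0 < finrank ℂ V := finrank_pos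
  have hc0 : c = 0 := by
    have h6 : c * (finrank ℂ V : ℂ) = 0 := by
      rw [smul_eq_mul] at htr
      linear_combination -htr
    rcases mul_eq_zero.mp h6 with h | h
    · exact h
    · exfalso
      have : (finrank ℂ V : ℂ) ≠ 0 := Nat.cast_ne_zero.mpr hfr.ne'
      exact this h
  rw [hc0, zero_smul] at heq
  -- now ρ g ^ 2 = -1
  have hmul1 : V.ρ g * V.ρ g⁻¹ = 1 := by
    rw [← map_mul, mul_inv_cancel, map_one]
  have hneg : V.ρ g⁻¹ = -(V.ρ g) := eq_neg_of_add_eq_zero_right heq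
  have hsq : (V.ρ g) * (V.ρ g) = -1 := by
    have h1 : V.ρ g * -(V.ρ g) = 1 := by rw [← hneg]; exact hmul1
    rw [mul_neg] at h1
    exact neg_eq_iff_eq_neg.mp h1
  -- order of g is odd
  have hmodd : Odd (orderOf g) := by
    have hdvd : orderOf g ∣ Nat.card K := Subgroup.orderOf_dvd_natCard K hg
    rcases Nat.even_or_odd (orderOf g) with he | ho
    · exfalso
      obtain ⟨c', hc'⟩ := hdvd
      have : Even (Nat.card K) := by
        rw [hc']
        exact he.mul_right c'
      exact (Nat.not_even_iff_odd.mpr hoddK) this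
    · exact ho
  have hpow : (V.ρ g) ^ orderOf g = 1 := by
    rw [← map_pow, pow_orderOf_eq_one, map_one]
  have hcontra : (1 : V →ₗ[ℂ] V) = -1 := by
    calc (1 : V →ₗ[ℂ] V) = ((V.ρ g) ^ orderOf g) ^ 2 := by rw [hpow, one_pow]
    _ = ((V.ρ g) * (V.ρ g)) ^ orderOf g := by rw [← pow_mul, pow_mul', pow_two]
    _ = (-1 : V →ₗ[ℂ] V) ^ orderOf g := by rw [hsq]
    _ = -1 := hmodd.neg_one_pow
  have := congrFun (congrArg (fun (ψ : V →ₗ[ℂ] V) => (ψ : V → V)) hcontra) v0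
  simp only [Module.End.one_apply, LinearMap.neg_apply] at this
  have hv00 : v0 = 0 := by
    have h2 : v0 + v0 = 0 := add_eq_zero_iff_eq_neg.mpr this
    have h3 : (2 : ℂ) • v0 = 0 := by rw [two_smul]; exact h2
    rcases smul_eq_zero.mp h3 with h | h
    · exact absurd h two_ne_zero
    · exact h
  exact hv0 hv00

lemma vanishing_of_not_mem [Fintype G] (K : Subgroup G) [K.Normal]
    (hG : ¬ ∀ a b : G, a * b = b * a)
    (hab : ∀ a ∈ K, ∀ b ∈ K, a * b = b * a)
    (hoddK : Odd (Nat.card K)) (hindex : K.index = 2)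
    (hinv : ∀ g : G, g ∉ K → ∀ n ∈ K, g * n * g⁻¹ = n⁻¹)
    {g : G} (hg : g ∉ K) : IsVanishing g := by
  classical
  letI commK : CommGroup K :=
    { (inferInstance : Group K) with
      mul_comm := fun a b => Subtype.ext (hab a a.2 b b.2) }
  -- K is nontrivial
  obtain ⟨n0, hn0K, hn0⟩ : ∃ x ∈ K, x ≠ (1 : G) := by
    rcases Subgroup.bot_or_exists_ne_one K with hbot | h
    · exfalso
      apply hG
      have hsq1 : ∀ x : G, x * x = 1 := by
        intro x
        by_cases hx : x ∈ K
        · rw [hbot, Subgroup.mem_bot] at hx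
          rw [hx, one_mul]
        · exact sq_one hoddK hindex hinv hx
      have hinv_eq : ∀ x : G, x⁻¹ = x := fun x => inv_eq_of_mul_eq_one_right (hsq1 x)
      intro a b
      have h1 := hinv_eq (a * b)
      rw [mul_inv_rev, hinv_eq a, hinv_eq b] at h1
      exact h1.symm
    · exact h
  -- a nontrivial character of K
  haveI : Finite K := Subtype.finite
  haveI : NeZero ((Monoid.exponent K : ℕ) : ℂ) :=
    ⟨Nat.cast_ne_zero.mpr Monoid.exponent_ne_zero_of_finite⟩
  obtain ⟨lam, hlam⟩ := CommGroup.exists_apply_ne_one_of_hasEnoughRootsOfUnity K ℂ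
      (a := ⟨n0, hn0K⟩) (fun h => hn0 (congrArg Subtype.val h))
  -- an involution outside K
  obtain ⟨t, ht⟩ := exists_not_mem (K := K) hindex
  have htt : t * t = 1 := sq_one hoddK hindex hinv ht
  have htinv : t⁻¹ = t := inv_eq_of_mul_eq_one_right htt
  have hmemt : ∀ x : G, x ∉ K → x * t ∈ K := fun x hx => prod_mem hindex hx ht
  -- the 2-dimensional representation
  let lc : K → ℂ := fun k => (lam k : ℂ)
  have lc_mul : ∀ a b c : K, (a : G) = (b : G) * (c : G) → lc a = lc b * lc c := by
    intro a b c h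
    have h1 : a = b * c := Subtype.ext h
    rw [h1]
    show ((lam (b * c) : ℂˣ) : ℂ) = _
    rw [map_mul, Units.val_mul]
  let Mf : G → Matrix (Fin 2) (Fin 2) ℂ := fun x =>
    if h : x ∈ K then !![lc ⟨x, h⟩, 0; 0, lc (⟨x, h⟩⁻¹)]
    else !![0, lc ⟨x * t, hmemt x h⟩; lc (⟨x * t, hmemt x h⟩⁻¹), 0]
  have hMK : ∀ (x : G) (h : x ∈ K), Mf x = !![lc ⟨x, h⟩, 0; 0, lc (⟨x, h⟩⁻¹)] :=
    fun x h => dif_pos h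
  have hMN : ∀ (x : G) (h : x ∉ K),
      Mf x = !![0, lc ⟨x * t, hmemt x h⟩; lc (⟨x * t, hmemt x h⟩⁻¹), 0] :=
    fun x h => dif_neg h
  -- multiplicativity
  have hMmul : ∀ x y : G, Mf (x * y) = Mf x * Mf y := by
    intro x y
    by_cases hx : x ∈ K <;> by_cases hy : y ∈ K
    · -- both in K
      have hxy : x * y ∈ K := K.mul_mem hx hy
      rw [hMK x hx, hMK y hy, hMK _ hxy]
      have e00 : lc ⟨x * y, hxy⟩ = lc ⟨x, hx⟩ * lc ⟨y, hy⟩ := lc_mul _ _ _ rfl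
      have e11 : lc (⟨x * y, hxy⟩⁻¹) = lc (⟨x, hx⟩⁻¹) * lc (⟨y, hy⟩⁻¹) := by
        apply lc_mul
        show (x * y)⁻¹ = x⁻¹ * y⁻¹
        rw [mul_inv_rev]
        exact hab y⁻¹ (K.inv_mem hy) x⁻¹ (K.inv_mem hx)
      ext i j
      fin_cases i <;> fin_cases j <;>
        simp [Matrix.mul_apply, Fin.sum_univ_two, e00, e11]
    · -- x ∈ K, y ∉ K
      have hxy : x * y ∉ K := by
        intro hmem
        exact hy (by simpa using K.mul_mem (K.inv_mem hx) hmem)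
      rw [hMK x hx, hMN y hy, hMN _ hxy]
      have e01 : lc ⟨x * y * t, hmemt _ hxy⟩ = lc ⟨x, hx⟩ * lc ⟨y * t, hmemt y hy⟩ :=
        lc_mul _ _ _ (mul_assoc x y t)
      have e10 : lc (⟨x * y * t, hmemt _ hxy⟩⁻¹) =
          lc (⟨x, hx⟩⁻¹) * lc (⟨y * t, hmemt y hy⟩⁻¹) := by
        apply lc_mul
        show (x * y * t)⁻¹ = x⁻¹ * (y * t)⁻¹
        rw [mul_assoc, mul_inv_rev]
        exact hab (y * t)⁻¹ (K.inv_mem (hmemt y hy)) x⁻¹ (K.inv_mem hx)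
      ext i j
      fin_cases i <;> fin_cases j <;>
        simp [Matrix.mul_apply, Fin.sum_univ_two, e01, e10]
    · -- x ∉ K, y ∈ K
      have hxy : x * y ∉ K := by
        intro hmem
        exact hx (by simpa using K.mul_mem hmem (K.inv_mem hy))
      rw [hMN x hx, hMK y hy, hMN _ hxy]
      have pid : (x * y) * t = (x * t) * y⁻¹ := by
        have h6 : t * y⁻¹ = y * t := by
          have h7 := hinv t ht y⁻¹ (K.inv_mem hy)
          rw [inv_inv] at h7
          calc t * y⁻¹ = (t * y⁻¹ * t⁻¹) * t := by group
          _ = y * t := by rw [h7]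
        rw [mul_assoc x t y⁻¹, h6, ← mul_assoc]
      have e01 : lc ⟨x * y * t, hmemt _ hxy⟩ = lc ⟨x * t, hmemt x hx⟩ * lc (⟨y, hy⟩⁻¹) :=
        lc_mul _ _ _ pid
      have e10 : lc (⟨x * y * t, hmemt _ hxy⟩⁻¹) =
          lc (⟨x * t, hmemt x hx⟩⁻¹) * lc ⟨y, hy⟩ := by
        apply lc_mul
        show (x * y * t)⁻¹ = (x * t)⁻¹ * y
        rw [pid, mul_inv_rev, inv_inv]
        exact hab y hy (x * t)⁻¹ (K.inv_mem (hmemt x hx))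
      ext i j
      fin_cases i <;> fin_cases j <;>
        simp [Matrix.mul_apply, Fin.sum_univ_two, e01, e10]
    · -- x ∉ K, y ∉ K
      have hxy : x * y ∈ K := prod_mem hindex hx hy
      rw [hMN x hx, hMN y hy, hMK _ hxy]
      have hyy : y⁻¹ = y := inv_eq_of_mul_eq_one_right (sq_one hoddK hindex hinv hy)
      have hxx : x⁻¹ = x := inv_eq_of_mul_eq_one_right (sq_one hoddK hindex hinv hx)
      have e00 : lc ⟨x * y, hxy⟩ = lc ⟨x * t, hmemt x hx⟩ * lc (⟨y * t, hmemt y hy⟩⁻¹) := by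
        apply lc_mul
        show x * y = (x * t) * (y * t)⁻¹
        have h8 : (x * t) * (y * t)⁻¹ = x * y⁻¹ := by group
        rw [h8, hyy]
      have e11 : lc (⟨x * y, hxy⟩⁻¹) =
          lc (⟨x * t, hmemt x hx⟩⁻¹) * lc ⟨y * t, hmemt y hy⟩ := by
        apply lc_mul
        show (x * y)⁻¹ = (x * t)⁻¹ * (y * t)
        have hxt : (x * t)⁻¹ = t * x := by rw [mul_inv_rev, htinv, hxx]
        have h5 := hinv t ht (x⁻¹ * y) (by rw [hxx]; exact hxy)
        rw [hxx] at h5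
        rw [htinv] at h5
        -- h5 : t * (x * y) * t = (x * y)⁻¹
        rw [← h5, hxt]
        group
      ext i j
      fin_cases i <;> fin_cases j <;>
        simp [Matrix.mul_apply, Fin.sum_univ_two, e00, e11]
  have hM1 : Mf 1 = 1 := by
    rw [hMK 1 K.one_mem]
    have h1 : (⟨(1 : G), K.one_mem⟩ : K) = 1 := rfl
    rw [h1, inv_one]
    show !![((lam 1 : ℂˣ) : ℂ), 0; 0, ((lam 1 : ℂˣ) : ℂ)] = 1
    rw [map_one, Matrix.one_fin_two]
    norm_num
  let ρ : Representation ℂ G (Fin 2 → ℂ) :=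
    { toFun := fun x => Matrix.toLin' (Mf x)
      map_one' := by
        show Matrix.toLin' (Mf 1) = 1
        rw [hM1, Matrix.toLin'_one]; rfl
      map_mul' := fun x y => by
        show Matrix.toLin' (Mf (x * y)) = Matrix.toLin' (Mf x) * Matrix.toLin' (Mf y)
        rw [hMmul, Matrix.toLin'_mul]; rfl }
  let X : FDRep ℂ G := FDRep.of ρ
  refine ⟨X, ?_, ?_⟩
  · -- simplicity
    apply simple_of_invariant_submodule
    · refine ⟨(![1, 0] : Fin 2 → ℂ), fun h => ?_⟩
      have h0 : (![1, 0] : Fin 2 → ℂ) 0 = (0 : Fin 2 → ℂ) 0 := congrFun h 0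
      simp at h0
    · intro W hW
      by_cases hWbot : W = ⊥
      · exact Or.inl hWbot
      right
      obtain ⟨v', hvW', hv0'⟩ := (Submodule.ne_bot_iff W).mp hWbot
      let v : Fin 2 → ℂ := v'
      have hvW : v ∈ W := hvW'
      have hv0 : v ≠ 0 := fun h => hv0' (by exact h)
      obtain ⟨u, hu_def⟩ : ∃ u : ℂ, u = lc ⟨n0, hn0K⟩ := ⟨_, rfl⟩
      have hu0 : u ≠ 0 := by rw [hu_def]; exact Units.ne_zero _
      have hu1 : u ≠ 1 := by
        rw [hu_def]
        exact fun h => hlam (Units.ext h)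
      have huinv : lc (⟨n0, hn0K⟩⁻¹) = u⁻¹ := by
        rw [hu_def]
        show ((lam (⟨n0, hn0K⟩⁻¹) : ℂˣ) : ℂ) = _
        rw [map_inv]
        exact Units.val_inv_eq_inv_val _
      have hum : u ^ orderOf (⟨n0, hn0K⟩ : K) = 1 := by
        rw [hu_def]
        show ((lam _ : ℂˣ) : ℂ) ^ _ = 1
        rw [← Units.val_pow_eq_pow_val, ← map_pow, pow_orderOf_eq_one, map_one, Units.val_one]
      have hmodd : Odd (orderOf (⟨n0, hn0K⟩ : K)) := by
        have hdvd := orderOf_dvd_natCard (⟨n0, hn0K⟩ : K)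
        rcases Nat.even_or_odd (orderOf (⟨n0, hn0K⟩ : K)) with he | ho
        · exfalso
          obtain ⟨c', hc'⟩ := hdvd
          exact (Nat.not_even_iff_odd.mpr hoddK) (hc' ▸ he.mul_right c')
        · exact ho
      have hune : u ≠ u⁻¹ := by
        intro hueq
        obtain ⟨j, hj⟩ := hmodd
        have hu2 : u ^ 2 = 1 := by
          rw [pow_two]
          nth_rewrite 2 [hueq]
          exact mul_inv_cancel₀ hu0
        have h9 : u ^ (2 * j + 1) = 1 := by rw [← hj]; exact hum
        rw [pow_succ, pow_mul, hu2, one_pow, one_mul] at h9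
        exact hu1 h9
      have hsubne : u - u⁻¹ ≠ 0 := sub_ne_zero.mpr hune
      -- how the group acts on vectors
      have happly : ∀ (x : G) (w : Fin 2 → ℂ), X.ρ x w = (Mf x).mulVec w := fun x w => rfl
      have hlc1 : lc 1 = 1 := by
        show ((lam 1 : ℂˣ) : ℂ) = 1
        rw [map_one, Units.val_one]
      have hswapW : ∀ w : Fin 2 → ℂ, w ∈ W → (![w 1, w 0] : Fin 2 → ℂ) ∈ W := by
        intro w hw
        have h1 := hW t w hw
        have h2 : X.ρ t w = (![w 1, w 0] : Fin 2 → ℂ) := by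
          rw [happly, hMN t ht]
          have h3 : (⟨t * t, hmemt t ht⟩ : K) = 1 := Subtype.ext htt
          rw [h3, inv_one, hlc1]
          funext i
          fin_cases i <;> simp [Matrix.mulVec, dotProduct, Fin.sum_univ_two]
        rwa [h2] at h1
      have hdiagW : ∀ w : Fin 2 → ℂ, w ∈ W →
          (![u * w 0, u⁻¹ * w 1] : Fin 2 → ℂ) ∈ W := by
        intro w hw
        have h1 := hW n0 w hw
        have h2 : X.ρ n0 w = (![u * w 0, u⁻¹ * w 1] : Fin 2 → ℂ) := by
          rw [happly, hMK n0 hn0K, huinv, ← hu_def]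
          funext i
          fin_cases i <;> simp [Matrix.mulVec, dotProduct, Fin.sum_univ_two]
        rwa [h2] at h1
      have hstep : ((![1, 0] : Fin 2 → ℂ) ∈ W) ∨ ((![0, 1] : Fin 2 → ℂ) ∈ W) := by
        by_cases ha : v 0 = 0
        · right
          have hb : v 1 ≠ 0 := by
            intro hb
            apply hv0
            funext i
            fin_cases i
            · exact ha
            · exact hb
          have h1 : (![u * v 0, u⁻¹ * v 1] : Fin 2 → ℂ) ∈ W := hdiagW v hvW
          have h2 : (![u * v 0, u⁻¹ * v 1] : Fin 2 → ℂ) - u • v ∈ W :=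
            W.sub_mem h1 (W.smul_mem _ hvW)
          have h3 : (![u * v 0, u⁻¹ * v 1] : Fin 2 → ℂ) - u • v =
              ![0, (u⁻¹ - u) * v 1] := by
            funext i
            fin_cases i <;> simp [Pi.sub_apply, Pi.smul_apply, smul_eq_mul, ha] <;> try ring
          rw [h3] at h2
          have h4 := W.smul_mem ((u⁻¹ - u) * v 1)⁻¹ h2
          have hne : (u⁻¹ - u) * v 1 ≠ 0 := by
            apply mul_ne_zero _ hb
            intro h
            apply hsubne
            have := neg_eq_of_add_eq_zero_left (by linear_combination h : u⁻¹ + -u = 0)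
            linear_combination -h
          have h5 : ((u⁻¹ - u) * v 1)⁻¹ • (![0, (u⁻¹ - u) * v 1] : Fin 2 → ℂ) = ![0, 1] := by
            funext i
            fin_cases i
            · simp
            · simp only [Pi.smul_apply, Matrix.cons_val_one, Matrix.head_cons, smul_eq_mul]
              exact inv_mul_cancel₀ hne
          rwa [h5] at h4
        · left
          have h1 : (![u * v 0, u⁻¹ * v 1] : Fin 2 → ℂ) ∈ W := hdiagW v hvW
          have h2 : (![u * v 0, u⁻¹ * v 1] : Fin 2 → ℂ) - u⁻¹ • v ∈ W :=
            W.sub_mem h1 (W.smul_mem _ hvW)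
          have h3 : (![u * v 0, u⁻¹ * v 1] : Fin 2 → ℂ) - u⁻¹ • v =
              ![(u - u⁻¹) * v 0, 0] := by
            funext i
            fin_cases i <;> simp [Pi.sub_apply, Pi.smul_apply, smul_eq_mul] <;> try ring
          rw [h3] at h2
          have hne : (u - u⁻¹) * v 0 ≠ 0 := mul_ne_zero hsubne ha
          have h4 := W.smul_mem ((u - u⁻¹) * v 0)⁻¹ h2
          have h5 : ((u - u⁻¹) * v 0)⁻¹ • (![(u - u⁻¹) * v 0, 0] : Fin 2 → ℂ) = ![1, 0] := by
            funext i
            fin_cases i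
            · simp only [Pi.smul_apply, Matrix.cons_val_zero, smul_eq_mul]
              exact inv_mul_cancel₀ hne
            · simp
          rwa [h5] at h4
      have he01 : ((![1, 0] : Fin 2 → ℂ) ∈ W) ∧ ((![0, 1] : Fin 2 → ℂ) ∈ W) := by
        rcases hstep with h | h
        · refine ⟨h, ?_⟩
          have h2 := hswapW _ h
          simpa using h2
        · refine ⟨?_, h⟩
          have h2 := hswapW _ h
          simpa using h2
      rw [Submodule.eq_top_iff']
      intro w0
      let w : Fin 2 → ℂ := w0
      have hw : w = w 0 • (![1, 0] : Fin 2 → ℂ) + w 1 • ![0, 1] := by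
        funext i
        fin_cases i <;> simp [Pi.add_apply, Pi.smul_apply, smul_eq_mul]
      show w ∈ W
      rw [hw]
      exact W.add_mem (W.smul_mem _ he01.1) (W.smul_mem _ he01.2)
  · -- character vanishes at g
    show LinearMap.trace ℂ (Fin 2 → ℂ) (Matrix.toLin' (Mf g)) = 0
    rw [LinearMap.trace_eq_matrix_trace ℂ (Pi.basisFun ℂ (Fin 2))]
    rw [show LinearMap.toMatrix (Pi.basisFun ℂ (Fin 2)) (Pi.basisFun ℂ (Fin 2))
        (Matrix.toLin' (Mf g)) = Mf g from by
      rw [LinearMap.toMatrix_eq_toMatrix', LinearMap.toMatrix'_toLin']]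
    rw [hMN g hg, Matrix.trace_fin_two_of, add_zero]

end Stmt13Helper

/-- In a Frobenius group with abelian odd-order kernel `K` and complement of order 2
(elements outside `K` invert `K`), the vanishing elements are exactly the elements of
`G \ K`, which form a single conjugacy class of involutions. -/
theorem stmt13 (G : Type) [Group G] [Fintype G]
    (hG : ¬ ∀ a b : G, a * b = b * a)
    (K : Subgroup G) [K.Normal]
    (hab : ∀ a ∈ K, ∀ b ∈ K, a * b = b * a)
    (hoddK : Odd (Nat.card K)) (hindex : K.index = 2)
    (hinv : ∀ g : G, g ∉ K → ∀ n ∈ K, g * n * g⁻¹ = n⁻¹) :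
    (∀ g : G, IsVanishing g ↔ g ∉ K) ∧
      (∀ g : G, g ∉ K → orderOf g = 2) ∧
      (∀ g h : G, g ∉ K → h ∉ K → IsConj g h) := by
  refine ⟨?_, ?_, ?_⟩
  · intro g
    constructor
    · intro hvan
      by_contra h
      exact Stmt13Helper.not_vanishing_of_mem K hab hoddK hindex hinv h hvan
    · intro hg
      exact Stmt13Helper.vanishing_of_not_mem K hG hab hoddK hindex hinv hg
  · intro g hg
    exact Stmt13Helper.order_two hoddK hindex hinv hg
  · intro g h hg hh
    exact Stmt13Helper.conj_of_not_mem hoddK hindex hinv hg hh
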